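/- For every finite connected simple graph G, the strong prism satisfies μ(G ⊠ P_2) ≥ max{n(G), 2μ(G)}; in particular, for either vertex p of P_2 the set V(G) × {p} is a mutual-visibility set of G ⊠ P_2. -/

import Mathlib

open SimpleGraph

/-- Vertices `x` and `y` are `X`-visible in `G`: some shortest `x,y`-path has
no internal vertex in `X`. -/
def Visible {V : Type*} (G : SimpleGraph V) (X : Set V) (x y : V) : Prop :=
  ∃ p : G.Walk x y, p.length = G.dist x y ∧ ∀ v ∈ p.support, v ∈ X → v = x ∨ v = y

/-- `X` is a mutual-visibility set of `G`: every two vertices of `X` are `X`-visible. -/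
def IsMVSet {V : Type*} (G : SimpleGraph V) (X : Set V) : Prop :=
  ∀ x ∈ X, ∀ y ∈ X, Visible G X x y

/-- `X` is a total mutual-visibility set of `G`: every two vertices of `G` are
`X`-visible. -/
def IsTMVSet {V : Type*} (G : SimpleGraph V) (X : Set V) : Prop :=
  ∀ x y : V, Visible G X x y

/-- The mutual-visibility number of `G`: the maximum cardinality of a
mutual-visibility set. -/
noncomputable def mu {V : Type*} (G : SimpleGraph V) : ℕ :=
  sSup {n | ∃ X : Set V, IsMVSet G X ∧ X.ncard = n}

/-- The total mutual-visibility number of `G`: the maximum cardinality of a total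
mutual-visibility set. -/
noncomputable def muT {V : Type*} (G : SimpleGraph V) : ℕ :=
  sSup {n | ∃ X : Set V, IsTMVSet G X ∧ X.ncard = n}

/-- A feasible total mutual-visibility set: a total mutual-visibility set `S` such that
any two adjacent vertices of `S` have a common neighbor outside `S`. -/
def IsFeasibleTMVSet {V : Type*} (G : SimpleGraph V) (S : Set V) : Prop :=
  IsTMVSet G S ∧ ∀ x ∈ S, ∀ y ∈ S, G.Adj x y → ∃ z ∉ S, G.Adj x z ∧ G.Adj y z

/-- The strong product of two simple graphs. -/
def strongProd {α β : Type*} (G : SimpleGraph α) (H : SimpleGraph β) :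
    SimpleGraph (α × β) where
  Adj x y := (G.Adj x.1 y.1 ∧ x.2 = y.2) ∨ (x.1 = y.1 ∧ H.Adj x.2 y.2) ∨
    (G.Adj x.1 y.1 ∧ H.Adj x.2 y.2)
  symm := by
    constructor
    rintro ⟨a, b⟩ ⟨c, d⟩ (⟨h1, h2⟩ | ⟨h1, h2⟩ | ⟨h1, h2⟩)
    · exact Or.inl ⟨h1.symm, h2.symm⟩
    · exact Or.inr (Or.inl ⟨h1.symm, h2.symm⟩)
    · exact Or.inr (Or.inr ⟨h1.symm, h2.symm⟩)
  loopless := by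
    constructor
    rintro ⟨a, b⟩ (⟨h, _⟩ | ⟨_, h⟩ | ⟨h, _⟩)
    · exact G.irrefl h
    · exact H.irrefl h
    · exact G.irrefl h

/-- The iterated (associative) strong product of a finite family of graphs:
two tuples are adjacent iff they are distinct and agree or are adjacent in every
coordinate. -/
def strongProdPi {k : ℕ} {V : Fin k → Type*} (G : ∀ i, SimpleGraph (V i)) :
    SimpleGraph (∀ i, V i) where
  Adj x y := x ≠ y ∧ ∀ i, x i = y i ∨ (G i).Adj (x i) (y i)
  symm := by
    constructor
    rintro x y ⟨hne, h⟩
    exact ⟨hne.symm, fun i => (h i).imp Eq.symm fun hh => (G i).adj_symm hh⟩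
  loopless := ⟨fun x h => h.1 rfl⟩

/-- A universal vertex: adjacent to all other vertices. -/
def IsUniversal {V : Type*} (G : SimpleGraph V) (v : V) : Prop :=
  ∀ u : V, u ≠ v → G.Adj v u

/-- A cut vertex: its removal disconnects the graph. -/
def IsCutVertex {V : Type*} (G : SimpleGraph V) (v : V) : Prop :=
  ¬ (G.induce ({v}ᶜ : Set V)).Preconnected

/-- An induced path: a path with no chords between its vertices. -/
def IsInducedPath {V : Type*} (G : SimpleGraph V) {u v : V} (p : G.Walk u v) : Prop :=
  p.IsPath ∧ ∀ a b : V, a ∈ p.support → b ∈ p.support → G.Adj a b → s(a, b) ∈ p.edges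

/-- A block graph: a connected graph in which every pair of vertices is joined
by a unique induced path. -/
def IsBlockGraph {V : Type*} (G : SimpleGraph V) : Prop :=
  G.Connected ∧ ∀ u v : V, ∃! p : G.Walk u v, IsInducedPath G p

/-- A convex set of vertices: every shortest path of `G` between two of its
vertices stays inside the set. -/
def IsConvexSet {V : Type*} (G : SimpleGraph V) (A : Set V) : Prop :=
  ∀ x ∈ A, ∀ y ∈ A, ∀ p : G.Walk x y, p.length = G.dist x y → ∀ v ∈ p.support, v ∈ A

/-- A cactus graph: a connected graph in which every edge lies in at most one cycle,
i.e. two cycles sharing an edge have the same edge set. -/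
def IsCactus {V : Type*} (G : SimpleGraph V) : Prop :=
  G.Connected ∧ ∀ (v : V) (p q : G.Walk v v), p.IsCycle → q.IsCycle →
    ∀ e, e ∈ p.edges → e ∈ q.edges → ∀ e', e' ∈ p.edges ↔ e' ∈ q.edges

/-- A cograph: obtained from a single vertex by repeatedly adding twins, i.e. there is
an enumeration of the vertices in which every vertex except the first is, at the
moment of its addition, a (true or false) twin of some earlier vertex in the induced
subgraph on the vertices added so far. -/
def IsCograph {V : Type*} (G : SimpleGraph V) : Prop :=
  ∃ l : List V, l.Nodup ∧ (∀ v : V, v ∈ l) ∧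
    ∀ i : Fin l.length, (i : ℕ) ≠ 0 →
      ∃ j : Fin l.length, (j : ℕ) < (i : ℕ) ∧
        ∀ z ∈ l.take ((i : ℕ) + 1), z ≠ l.get i → z ≠ l.get j →
          (G.Adj (l.get i) z ↔ G.Adj (l.get j) z)

/-- An enabling vertex: a vertex `v` adjacent to every vertex `u` of `G - v` whose
degree in `G - v` is less than `n(G) - 2`. -/
def IsEnabling {V : Type*} [Fintype V] (G : SimpleGraph V) (v : V) : Prop :=
  ∀ u : V, u ≠ v → (G.neighborSet u \ {v}).ncard < Fintype.card V - 2 → G.Adj v u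

lemma padj {i j : Fin 2} (h : i ≠ j) : (SimpleGraph.pathGraph 2).Adj i j := by
  rw [SimpleGraph.pathGraph_two_eq_top]
  exact h

lemma dist_fst_le {V W : Type*} {G : SimpleGraph V} {H : SimpleGraph W} (hG : G.Connected) :
    ∀ {a b : V × W} (w : (strongProd G H).Walk a b), G.dist a.1 b.1 ≤ w.length := by
  intro a b w
  induction w with
  | nil => simp [SimpleGraph.dist_self]
  | @cons a c b h q ih =>
    rw [SimpleGraph.Walk.length_cons]
    have tri := hG.dist_triangle (u := a.1) (v := c.1) (w := b.1)
    rcases h with ⟨h1, _⟩ | ⟨h1, _⟩ | ⟨h1, _⟩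
    · have h2 := SimpleGraph.dist_le (SimpleGraph.Walk.cons h1 SimpleGraph.Walk.nil)
      simp only [SimpleGraph.Walk.length_cons, SimpleGraph.Walk.length_nil] at h2
      omega
    · rw [h1]; omega
    · have h2 := SimpleGraph.dist_le (SimpleGraph.Walk.cons h1 SimpleGraph.Walk.nil)
      simp only [SimpleGraph.Walk.length_cons, SimpleGraph.Walk.length_nil] at h2
      omega

def liftH {V : Type*} {G : SimpleGraph V} (i : Fin 2) :
    ∀ {a b : V} (w : G.Walk a b),
      {w' : (strongProd G (SimpleGraph.pathGraph 2)).Walk (a, i) (b, i) //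
        w'.length = w.length ∧ ∀ v ∈ w'.support, v.1 ∈ w.support ∧ v.2 = i}
  | _, _, .nil => ⟨.nil, by simp⟩
  | a, b, .cons (v := c) h q =>
    let r := liftH i q
    ⟨SimpleGraph.Walk.cons (show (strongProd G (SimpleGraph.pathGraph 2)).Adj (a, i) (c, i) from Or.inl ⟨h, rfl⟩) r.1, by
      refine ⟨by simp [r.2.1], ?_⟩
      intro v hv
      rw [SimpleGraph.Walk.support_cons, List.mem_cons] at hv
      rcases hv with rfl | hv
      · exact ⟨SimpleGraph.Walk.start_mem_support _, rfl⟩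
      · obtain ⟨h1, h2⟩ := r.2.2 v hv
        exact ⟨by rw [SimpleGraph.Walk.support_cons]; exact List.mem_cons_of_mem _ h1, h2⟩⟩

def liftStart {V : Type*} {G : SimpleGraph V} (i j : Fin 2) (hij : i ≠ j) :
    ∀ {a b : V} (w : G.Walk a b), w.length ≠ 0 →
      {w' : (strongProd G (SimpleGraph.pathGraph 2)).Walk (a, i) (b, j) //
        w'.length = w.length ∧
        ∀ v ∈ w'.support, v = (a, i) ∨ (v.1 ∈ w.support.tail ∧ v.2 = j)}
  | _, _, .nil, h => absurd rfl h
  | a, b, .cons (v := c) h q, _ =>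
    let r := liftH j q
    ⟨SimpleGraph.Walk.cons (show (strongProd G (SimpleGraph.pathGraph 2)).Adj (a, i) (c, j) from Or.inr (Or.inr ⟨h, padj hij⟩)) r.1, by
      refine ⟨by simp [r.2.1], ?_⟩
      intro v hv
      rw [SimpleGraph.Walk.support_cons, List.mem_cons] at hv
      rcases hv with rfl | hv
      · exact Or.inl rfl
      · obtain ⟨h1, h2⟩ := r.2.2 v hv
        exact Or.inr ⟨by rw [SimpleGraph.Walk.support_cons]; exact h1, h2⟩⟩

def liftEnd {V : Type*} {G : SimpleGraph V} (i j : Fin 2) (hij : i ≠ j) :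
    ∀ {a b : V} (w : G.Walk a b), w.length ≠ 0 →
      {w' : (strongProd G (SimpleGraph.pathGraph 2)).Walk (a, j) (b, i) //
        w'.length = w.length ∧
        ∀ v ∈ w'.support, v = (b, i) ∨ v.2 = j} :=
  fun w hw =>
    let r := liftStart i j hij w.reverse (by simpa using hw)
    ⟨r.1.reverse, by
      refine ⟨by simp [r.2.1], ?_⟩
      intro v hv
      rw [SimpleGraph.Walk.support_reverse, List.mem_reverse] at hv
      rcases r.2.2 v hv with h | ⟨_, h2⟩
      · exact Or.inl h
      · exact Or.inr h2⟩

def zig {V : Type*} {G : SimpleGraph V} (i j : Fin 2) (hij : i ≠ j) :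
    ∀ {a b : V} (w : G.Walk a b), w.length ≠ 0 →
      {w' : (strongProd G (SimpleGraph.pathGraph 2)).Walk (a, i) (b, i) //
        w'.length = w.length ∧
        ∀ v ∈ w'.support, v = (a, i) ∨ v = (b, i) ∨ v.2 = j}
  | _, _, .nil, h => absurd rfl h
  | a, b, .cons h .nil, _ =>
    ⟨SimpleGraph.Walk.cons (show (strongProd G (SimpleGraph.pathGraph 2)).Adj (a, i) (b, i) from Or.inl ⟨h, rfl⟩) SimpleGraph.Walk.nil, by
      constructor
      · simp
      · intro v hv
        rw [SimpleGraph.Walk.support_cons, SimpleGraph.Walk.support_nil, List.mem_cons,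
          List.mem_singleton] at hv
        tauto⟩
  | a, b, .cons (v := c) h (.cons h2 q), _ =>
    let r := liftEnd i j hij (SimpleGraph.Walk.cons h2 q) (by simp)
    ⟨SimpleGraph.Walk.cons (show (strongProd G (SimpleGraph.pathGraph 2)).Adj (a, i) (c, j) from Or.inr (Or.inr ⟨h, padj hij⟩)) r.1, by
      refine ⟨by simp [r.2.1], ?_⟩
      intro v hv
      rw [SimpleGraph.Walk.support_cons, List.mem_cons] at hv
      rcases hv with rfl | hv
      · exact Or.inl rfl
      · rcases r.2.2 v hv with h | h
        · exact Or.inr (Or.inl h)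
        · exact Or.inr (Or.inr h)⟩


lemma dist_eq_of_lift {V : Type*} {G : SimpleGraph V} (hG : G.Connected)
    {a b : V × Fin 2} (w' : (strongProd G (SimpleGraph.pathGraph 2)).Walk a b)
    (h : w'.length = G.dist a.1 b.1) :
    w'.length = (strongProd G (SimpleGraph.pathGraph 2)).dist a b := by
  refine le_antisymm ?_ (SimpleGraph.dist_le w')
  obtain ⟨w'', hw''⟩ := SimpleGraph.Reachable.exists_walk_length_eq_dist
    (show (strongProd G (SimpleGraph.pathGraph 2)).Reachable a b from ⟨w'⟩)
  have h2 := dist_fst_le hG w''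
  omega

lemma tail_shortest {V : Type*} {G : SimpleGraph V} {a b : V} (w : G.Walk a b)
    (hw : w.length = G.dist a b) (h : a ∈ w.support.tail) : False := by
  classical
  cases w with
  | nil => simp at h
  | cons hadj q =>
    rw [SimpleGraph.Walk.support_cons, List.tail_cons] at h
    have h1 := SimpleGraph.dist_le (q.dropUntil a h)
    have h2 := SimpleGraph.Walk.length_dropUntil_le q h
    rw [SimpleGraph.Walk.length_cons] at hw
    omega

lemma mvA {V : Type*} {G : SimpleGraph V} (hG : G.Connected) (p : Fin 2) :
    IsMVSet (strongProd G (SimpleGraph.pathGraph 2))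
      (Set.univ ×ˢ ({p} : Set (Fin 2))) := by
  rintro ⟨g, p1⟩ hx ⟨g', p2⟩ hy
  simp only [Set.mem_prod, Set.mem_univ, Set.mem_singleton_iff, true_and] at hx hy
  subst p1; subst p2
  by_cases hgg : g = g'
  · subst hgg
    exact ⟨SimpleGraph.Walk.nil, by simp [SimpleGraph.dist_self], by simp⟩
  · obtain ⟨w, hw⟩ := hG.exists_walk_length_eq_dist g g'
    have hd : G.dist g g' ≠ 0 := (hG.pos_dist_of_ne hgg).ne'
    have hw0 : w.length ≠ 0 := by rw [hw]; exact hd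
    have hpq' : ∀ t : Fin 2, t ≠ t + 1 := by decide
    have hpq := hpq' p
    obtain ⟨r, hr1, hr2⟩ := zig p (p + 1) hpq w hw0
    refine ⟨r, dist_eq_of_lift hG r (by rw [hr1, hw]), ?_⟩
    intro v hv hvX
    simp only [Set.mem_prod, Set.mem_univ, Set.mem_singleton_iff, true_and] at hvX
    rcases hr2 v hv with h | h | h
    · exact Or.inl h
    · exact Or.inr h
    · exact absurd (hvX ▸ h) hpq

lemma mvB {V : Type*} {G : SimpleGraph V} (hG : G.Connected) (X : Set V)
    (hX : IsMVSet G X) :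
    IsMVSet (strongProd G (SimpleGraph.pathGraph 2)) (X ×ˢ (Set.univ : Set (Fin 2))) := by
  rintro ⟨ga, ia⟩ ha ⟨gb, ib⟩ hb
  simp only [Set.mem_prod, Set.mem_univ, and_true] at ha hb
  by_cases hg : ga = gb
  · subst hg
    by_cases hi : ia = ib
    · subst hi
      exact ⟨SimpleGraph.Walk.nil, by simp [SimpleGraph.dist_self], by simp⟩
    · have hadj : (strongProd G (SimpleGraph.pathGraph 2)).Adj (ga, ia) (ga, ib) :=
        Or.inr (Or.inl ⟨rfl, padj hi⟩)
      have hne : ((ga, ia) : V × Fin 2) ≠ (ga, ib) := by simp [hi]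
      refine ⟨SimpleGraph.Walk.cons hadj SimpleGraph.Walk.nil, ?_, ?_⟩
      · have h1 := SimpleGraph.dist_le (SimpleGraph.Walk.cons hadj SimpleGraph.Walk.nil)
        have h2 := SimpleGraph.Reachable.pos_dist_of_ne
          (Nonempty.intro (SimpleGraph.Walk.cons hadj SimpleGraph.Walk.nil)) hne
        simp only [SimpleGraph.Walk.length_cons, SimpleGraph.Walk.length_nil] at h1 ⊢
        omega
      · intro v hv _
        rw [SimpleGraph.Walk.support_cons, SimpleGraph.Walk.support_nil, List.mem_cons,
          List.mem_singleton] at hv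
        tauto
  · obtain ⟨w, hw1, hw2⟩ := hX ga ha gb hb
    have hw0 : w.length ≠ 0 := fun h => hg (SimpleGraph.Walk.eq_of_length_eq_zero h)
    by_cases hi : ia = ib
    · subst hi
      obtain ⟨r, hr1, hr2⟩ := liftH ia w
      refine ⟨r, dist_eq_of_lift hG r (by rw [hr1, hw1]), ?_⟩
      intro v hv hvX
      simp only [Set.mem_prod, Set.mem_univ, and_true] at hvX
      obtain ⟨h1, h2⟩ := hr2 v hv
      rcases hw2 v.1 h1 hvX with h3 | h3
      · exact Or.inl (Prod.ext h3 h2)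
      · exact Or.inr (Prod.ext h3 h2)
    · obtain ⟨r, hr1, hr2⟩ := liftStart ia ib hi w hw0
      refine ⟨r, dist_eq_of_lift hG r (by rw [hr1, hw1]), ?_⟩
      intro v hv hvX
      simp only [Set.mem_prod, Set.mem_univ, and_true] at hvX
      rcases hr2 v hv with h | ⟨h1, h2⟩
      · exact Or.inl h
      · have hvs : v.1 ∈ w.support := by
          rw [SimpleGraph.Walk.support_eq_cons]
          exact List.mem_cons_of_mem _ h1
        rcases hw2 v.1 hvs hvX with h3 | h3
        · exact absurd (h3 ▸ h1) (fun hh => tail_shortest w hw1 hh)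
        · exact Or.inr (Prod.ext h3 h2)

theorem stmt_13 {V : Type*} [Fintype V] (G : SimpleGraph V) (hG : G.Connected) :
    max (Fintype.card V) (2 * mu G) ≤ mu (strongProd G (SimpleGraph.pathGraph 2)) ∧
    ∀ p : Fin 2, IsMVSet (strongProd G (SimpleGraph.pathGraph 2))
      (Set.univ ×ˢ ({p} : Set (Fin 2))) :=  by
  have hbdd : BddAbove {n | ∃ X : Set (V × Fin 2),
      IsMVSet (strongProd G (SimpleGraph.pathGraph 2)) X ∧ X.ncard = n} := by
    refine ⟨Fintype.card (V × Fin 2), ?_⟩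
    rintro n ⟨X, -, rfl⟩
    have := Set.ncard_le_ncard (Set.subset_univ X) Set.finite_univ
    simpa [Set.ncard_univ, Nat.card_eq_fintype_card] using this
  have hc1 : ((Set.univ : Set V) ×ˢ ({(0 : Fin 2)} : Set (Fin 2))).ncard = Fintype.card V := by
    rw [← Nat.card_coe_set_eq, Nat.card_congr (Equiv.Set.prod _ _), Nat.card_prod,
      Nat.card_coe_set_eq, Nat.card_coe_set_eq, Set.ncard_univ, Set.ncard_singleton,
      Nat.card_eq_fintype_card, mul_one]
  have hsetG : {n | ∃ X : Set V, IsMVSet G X ∧ X.ncard = n}.Nonempty :=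
    ⟨0, ∅, fun x hx => absurd hx (Set.notMem_empty x), by simp⟩
  have hbddG : BddAbove {n | ∃ X : Set V, IsMVSet G X ∧ X.ncard = n} := by
    refine ⟨Fintype.card V, ?_⟩
    rintro n ⟨X, -, rfl⟩
    have := Set.ncard_le_ncard (Set.subset_univ X) Set.finite_univ
    simpa [Set.ncard_univ, Nat.card_eq_fintype_card] using this
  obtain ⟨X, hX, hXc⟩ : ∃ X : Set V, IsMVSet G X ∧ X.ncard = mu G :=
    Nat.sSup_mem hsetG hbddG
  have hc2 : (X ×ˢ (Set.univ : Set (Fin 2))).ncard = 2 * mu G := by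
    rw [← Nat.card_coe_set_eq, Nat.card_congr (Equiv.Set.prod _ _), Nat.card_prod,
      Nat.card_coe_set_eq, Nat.card_coe_set_eq, Set.ncard_univ, hXc,
      Nat.card_eq_fintype_card]
    simp [mul_comm]
  refine ⟨max_le ?_ ?_, mvA hG⟩
  · exact le_csSup hbdd ⟨(Set.univ : Set V) ×ˢ ({(0 : Fin 2)} : Set (Fin 2)), mvA hG 0, hc1⟩
  · exact le_csSup hbdd ⟨X ×ˢ (Set.univ : Set (Fin 2)), mvB hG X hX, hc2⟩
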